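/- Let ω(λ) = λ² + λ⁴, let t > 0, let j ≥ 0 be an integer, and let ψ : ℂ → ℂ be continuous with lim_{A→∞} sup_{|λ|=A} |ψ(λ)| = 0. Then lim_{R→∞} ∫_{K ∩ {|λ|=R}} λ^{3−j} e^{−ω(λ)t} ψ(λ) dλ = 0 for each connected component K of the set {λ ∈ ℂ : Re(λ² + λ⁴) ≥ 0}, the arc K ∩ {|λ|=R} being traversed counterclockwise. -/

import Mathlib

open MeasureTheory Filter Complex Real Set Topology

noncomputable section

/-- The region `{λ ∈ ℂ : Re(λ² + λ⁴) ≥ 0}`. -/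
def S3 : Set ℂ := {l : ℂ | 0 ≤ ((l ^ 2 + l ^ 4).re)}


lemma aux_cos_lt_half {w : ℝ} (h1 : π/3 < w) (h2 : w < 5*π/3) : Real.cos w < 1/2 := by
  have hpi := Real.pi_pos
  rcases le_or_gt w π with hw | hw
  · have := Real.strictAntiOn_cos ⟨by positivity, by linarith⟩ ⟨by linarith, hw⟩ h1
    rwa [Real.cos_pi_div_three] at this
  · have hc : Real.cos w = Real.cos (2*π - w) := (Real.cos_two_pi_sub w).symm
    rw [hc]
    have := Real.strictAntiOn_cos ⟨by positivity, by linarith⟩ ⟨by linarith, by linarith⟩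
      (show π/3 < 2*π - w by linarith)
    rwa [Real.cos_pi_div_three] at this

lemma aux_neg_half_lt_cos {w : ℝ} (h1 : 0 ≤ w) (h2 : w < 2*π/3) : -(1/2) < Real.cos w := by
  have hpi := Real.pi_pos
  have hval : Real.cos (2*π/3) = -(1/2) := by
    have : (2*π/3 : ℝ) = π - π/3 := by ring
    rw [this, Real.cos_pi_sub, Real.cos_pi_div_three]
  have := Real.strictAntiOn_cos ⟨h1, by linarith⟩ ⟨by positivity, by linarith⟩ h2
  rwa [hval] at this

lemma locate_plus {z : ℝ} (hz0 : 0 < z) (hz1 : z ≤ 4*π) (h : (1:ℝ)/2 ≤ Real.cos z) :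
    |z| ≤ π/3 ∨ |z - 2*π| ≤ π/3 ∨ |z - 4*π| ≤ π/3 := by
  have hpi := Real.pi_pos
  by_contra hcon
  push_neg at hcon
  obtain ⟨c1, c2, c3⟩ := hcon
  have d1 : π/3 < z := by
    rcases lt_abs.mp c1 with h' | h' <;> linarith
  have d3 : z < 11*π/3 := by
    rcases lt_abs.mp c3 with h' | h' <;> linarith
  have key : Real.cos z < 1/2 := by
    rcases lt_abs.mp c2 with h' | h'
    · -- z > 2π + π/3
      have hc : Real.cos z = Real.cos (z - 2*π) := (Real.cos_sub_two_pi z).symm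
      rw [hc]
      exact aux_cos_lt_half (by linarith) (by linarith)
    · -- z < 2π - π/3
      exact aux_cos_lt_half d1 (by linarith)
  linarith

lemma locate_minus {z : ℝ} (hz0 : 0 < z) (hz1 : z ≤ 4*π) (h : Real.cos z ≤ -(1/2)) :
    |z - π| ≤ π/3 ∨ |z - 3*π| ≤ π/3 := by
  have hpi := Real.pi_pos
  by_contra hcon
  push_neg at hcon
  obtain ⟨c1, c2⟩ := hcon
  have key : -(1/2) < Real.cos z := by
    rcases lt_abs.mp c1 with h1 | h1
    · -- z > 4π/3
      rcases lt_abs.mp c2 with h2 | h2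
      · -- z > 10π/3
        have hc : Real.cos z = Real.cos (2*π - (z - 2*π)) := by
          rw [Real.cos_two_pi_sub, Real.cos_sub_two_pi]
        rw [hc]
        exact aux_neg_half_lt_cos (by linarith) (by linarith)
      · -- z < 8π/3
        rcases le_or_gt z (2*π) with hB | hB
        · have hc : Real.cos z = Real.cos (2*π - z) := (Real.cos_two_pi_sub z).symm
          rw [hc]
          exact aux_neg_half_lt_cos (by linarith) (by linarith)
        · have hc : Real.cos z = Real.cos (z - 2*π) := (Real.cos_sub_two_pi z).symm
          rw [hc]
          exact aux_neg_half_lt_cos (by linarith) (by linarith)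
    · -- z < 2π/3
      exact aux_neg_half_lt_cos hz0.le (by linarith)
  linarith

lemma chord {A y : ℝ} (hA1 : 1/2 ≤ A) (hA2 : A ≤ 4/5) (hy0 : 0 ≤ y) (hyA : y ≤ Real.arccos A) :
    (Real.arccos A - y) / 8 ≤ Real.cos y - A := by
  have hpi := Real.pi_pos
  have hpi2 : π < 3.15 := Real.pi_lt_d2
  have hpi3 : 3.14 < π := by
    have := Real.pi_gt_d6; linarith
  set x := Real.arccos A with hxdef
  have hcosx : Real.cos x = A := Real.cos_arccos (by linarith) (by linarith)
  have hx0 : 0 ≤ x := Real.arccos_nonneg A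
  have hxpi : x ≤ π := Real.arccos_le_pi A
  have hxpi3 : x ≤ π/3 := by
    by_contra h'
    push_neg at h'
    have := Real.strictAntiOn_cos ⟨by positivity, by linarith⟩ ⟨hx0, hxpi⟩ h'
    rw [Real.cos_pi_div_three, hcosx] at this
    linarith
  have hxlb : 0.63 ≤ x := by
    have h1 : 1 - x^2/2 ≤ Real.cos x := Real.one_sub_sq_div_two_le_cos
    nlinarith
  -- product-to-sum
  have hps : Real.cos y - A = 2 * Real.sin ((x+y)/2) * Real.sin ((x-y)/2) := by
    rw [← hcosx, Real.cos_sub_cos, show (y-x)/2 = -((x-y)/2) by ring, Real.sin_neg]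
    ring
  have hs1 : x/π ≤ Real.sin ((x+y)/2) := by
    have h := Real.mul_le_sin (x := (x+y)/2) (by linarith) (by linarith)
    calc x/π = 2/π*(x/2) := by field_simp
      _ ≤ 2/π*((x+y)/2) :=
        mul_le_mul_of_nonneg_left (by linarith) (by positivity)
      _ ≤ Real.sin ((x+y)/2) := h
  have hs2 : (x-y)/π ≤ Real.sin ((x-y)/2) := by
    have h := Real.mul_le_sin (x := (x-y)/2) (by linarith) (by linarith)
    calc (x-y)/π = 2/π*((x-y)/2) := by field_simp
      _ ≤ Real.sin ((x-y)/2) := h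
  have hnn1 : (0:ℝ) ≤ x/π := by positivity
  have hnn2 : (0:ℝ) ≤ (x-y)/π := by
    apply div_nonneg (by linarith) hpi.le
  have hprod : 2*(x/π)*((x-y)/π) ≤ 2 * Real.sin ((x+y)/2) * Real.sin ((x-y)/2) := by
    nlinarith [hs1, hs2, hnn1, hnn2]
  rw [hps]
  refine le_trans ?_ hprod
  have hqnn : 0 ≤ (x-y)/π := hnn2
  have ha1 : 0.2*((x-y)/π) ≤ (x/π)*((x-y)/π) := by
    apply mul_le_mul_of_nonneg_right ?_ hqnn
    rw [le_div_iff₀ hpi]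
    nlinarith
  have ha2 : (x-y) = ((x-y)/π)*π := (div_mul_cancel₀ _ hpi.ne').symm
  nlinarith [mul_le_mul_of_nonneg_right (le_of_lt hpi2) hqnn]



lemma integral_exp_linear (p d a b : ℝ) (hab : a ≤ b) (hp : 0 < p) :
    ∫ x in Icc a b, Real.exp (p*x + d) ≤ Real.exp (p*b + d) / p := by
  have hderiv : ∀ x ∈ uIcc a b, HasDerivAt (fun x => Real.exp (p*x + d) / p)
      (Real.exp (p*x + d)) x := by
    intro x _
    have h1 : HasDerivAt (fun x : ℝ => p*x + d) p x := by
      simpa using ((hasDerivAt_id x).const_mul p).add_const d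
    have h2 := (Real.hasDerivAt_exp (p*x + d)).comp x h1
    have h3 := h2.div_const p
    simpa [mul_div_assoc, mul_div_cancel_right₀, hp.ne'] using h3
  have hcont : IntervalIntegrable (fun x => Real.exp (p*x + d)) volume a b :=
    (Real.continuous_exp.comp (by continuity)).intervalIntegrable a b
  have heq := intervalIntegral.integral_eq_sub_of_hasDerivAt hderiv hcont
  rw [MeasureTheory.integral_Icc_eq_integral_Ioc, ← intervalIntegral.integral_of_le hab, heq]
  have := Real.exp_nonneg (p*a + d)
  have h4 : 0 ≤ Real.exp (p*a+d) / p := by positivity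
  linarith [div_nonneg (Real.exp_nonneg (p*a+d)) hp.le]

lemma integral_exp_linear' (p d a b : ℝ) (hab : a ≤ b) (hp : 0 < p) :
    ∫ x in Icc a b, Real.exp (-(p*x) + d) ≤ Real.exp (-(p*a) + d) / p := by
  have hderiv : ∀ x ∈ uIcc a b, HasDerivAt (fun x => -(Real.exp (-(p*x) + d) / p))
      (Real.exp (-(p*x) + d)) x := by
    intro x _
    have h1 : HasDerivAt (fun x : ℝ => -(p*x) + d) (-p) x := by
      simpa using (((hasDerivAt_id x).const_mul p).neg).add_const d
    have h2 := (Real.hasDerivAt_exp (-(p*x) + d)).comp x h1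
    have h3 := (h2.div_const p).neg
    refine h3.congr_deriv ?_
    field_simp
  have hcont : IntervalIntegrable (fun x => Real.exp (-(p*x) + d)) volume a b :=
    (Real.continuous_exp.comp (by continuity)).intervalIntegrable a b
  have heq := intervalIntegral.integral_eq_sub_of_hasDerivAt hderiv hcont
  rw [MeasureTheory.integral_Icc_eq_integral_Ioc, ← intervalIntegral.integral_of_le hab, heq]
  have h4 : 0 ≤ Real.exp (-(p*b)+d) / p := by positivity
  linarith

/-- integral of the two-sided exponential hump over its interval -/
lemma hump_integral_raw (μ c x : ℝ) (hμ : 0 < μ) (hx : 0 ≤ x) :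
    ∫ θ in Ioc 0 (2*π), (Icc (c - x/2) (c + x/2)).indicator
      (fun θ => Real.exp (2*μ*(θ-c) - μ*x) + Real.exp (-(2*μ*(θ-c)) - μ*x)) θ ≤ 1/μ := by
  set g : ℝ → ℝ := fun θ => Real.exp (2*μ*(θ-c) - μ*x) + Real.exp (-(2*μ*(θ-c)) - μ*x) with hg
  have hgc : Continuous g := by
    apply Continuous.add <;> exact Real.continuous_exp.comp (by continuity)
  have hgnn : ∀ θ, 0 ≤ g θ := fun θ => by positivity
  have hind : Integrable ((Icc (c - x/2) (c + x/2)).indicator g) volume :=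
    (hgc.integrableOn_Icc).integrable_indicator measurableSet_Icc
  have step1 : ∫ θ in Ioc 0 (2*π), (Icc (c - x/2) (c + x/2)).indicator g θ
      ≤ ∫ θ in Icc (c - x/2) (c + x/2), g θ := by
    rw [← MeasureTheory.integral_indicator measurableSet_Icc]
    exact MeasureTheory.setIntegral_le_integral hind
      (Filter.Eventually.of_forall fun θ => Set.indicator_nonneg (fun θ _ => hgnn θ) θ)
  refine step1.trans ?_
  have hsplit : ∫ θ in Icc (c - x/2) (c + x/2), g θ
      = (∫ θ in Icc (c - x/2) (c + x/2), Real.exp (2*μ*(θ-c) - μ*x))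
        + ∫ θ in Icc (c - x/2) (c + x/2), Real.exp (-(2*μ*(θ-c)) - μ*x) := by
    apply MeasureTheory.integral_add
    · exact (Real.continuous_exp.comp (by continuity)).integrableOn_Icc
    · exact (Real.continuous_exp.comp (by continuity)).integrableOn_Icc
  rw [hsplit]
  have hμ2 : (0:ℝ) < 2*μ := by positivity
  have e1 : ∫ θ in Icc (c - x/2) (c + x/2), Real.exp (2*μ*(θ-c) - μ*x) ≤ 1/(2*μ) := by
    have hfun : (fun θ : ℝ => Real.exp (2*μ*(θ-c) - μ*x))
        = fun θ => Real.exp (2*μ*θ + (-(2*μ*c) - μ*x)) := by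
      funext θ; ring_nf
    have h := integral_exp_linear (2*μ) (-(2*μ*c) - μ*x) (c - x/2) (c + x/2) (by linarith) hμ2
    rw [hfun]
    refine h.trans ?_
    rw [show 2*μ*(c+x/2) + (-(2*μ*c) - μ*x) = 0 by ring, Real.exp_zero]
  have e2 : ∫ θ in Icc (c - x/2) (c + x/2), Real.exp (-(2*μ*(θ-c)) - μ*x) ≤ 1/(2*μ) := by
    have hfun : (fun θ : ℝ => Real.exp (-(2*μ*(θ-c)) - μ*x))
        = fun θ => Real.exp (-(2*μ*θ) + (2*μ*c - μ*x)) := by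
      funext θ; ring_nf
    have h := integral_exp_linear' (2*μ) (2*μ*c - μ*x) (c - x/2) (c + x/2) (by linarith) hμ2
    rw [hfun]
    refine h.trans ?_
    rw [show -(2*μ*(c - x/2)) + (2*μ*c - μ*x) = 0 by ring, Real.exp_zero]
  have h2 : 1/(2*μ) + 1/(2*μ) = 1/μ := by
    field_simp
    norm_num
  linarith




def hump (μ x c : ℝ) : ℝ → ℝ := fun θ =>
  (Icc (c - x/2) (c + x/2)).indicator
    (fun θ => Real.exp (2*μ*(θ-c) - μ*x) + Real.exp (-(2*μ*(θ-c)) - μ*x)) θ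

lemma hump_nonneg (μ x c θ : ℝ) : 0 ≤ hump μ x c θ :=
  Set.indicator_nonneg (fun θ _ => by positivity) θ

lemma hump_ge {μ x c θ : ℝ} (hθ : |θ - c| ≤ x/2) :
    Real.exp (2*μ*|θ - c| - μ*x) ≤ hump μ x c θ := by
  have hmem : θ ∈ Icc (c - x/2) (c + x/2) := by
    rw [Set.mem_Icc]
    rcases abs_le.mp hθ with ⟨h1, h2⟩
    constructor <;> linarith
  rw [hump, Set.indicator_of_mem hmem]
  rcases abs_cases (θ - c) with ⟨he, _⟩ | ⟨he, _⟩
  · rw [he]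
    have := Real.exp_nonneg (-(2*μ*(θ-c)) - μ*x)
    linarith
  · rw [he]
    have := Real.exp_nonneg (2*μ*(θ-c) - μ*x)
    rw [show 2*μ*(-(θ-c)) - μ*x = -(2*μ*(θ-c)) - μ*x by ring]
    linarith

lemma hump_integrableOn (μ x c : ℝ) : IntegrableOn (hump μ x c) (Ioc 0 (2*π)) := by
  apply Integrable.indicator ?_ measurableSet_Icc
  exact Continuous.integrableOn_Ioc (by continuity)

lemma hump_integral (μ c x : ℝ) (hμ : 0 < μ) (hx : 0 ≤ x) :
    ∫ θ in Ioc 0 (2*π), hump μ x c θ ≤ 1/μ :=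
  hump_integral_raw μ c x hμ hx

/-- common step: from `cos y = cos 2θ`-type info conclude bound by `hump`. -/
lemma hump_step {A lam γ θ : ℝ} (hA1 : 1/2 ≤ A) (hA2 : A ≤ 4/5) (hlam : 0 < lam)
    (hy3 : |2*θ - 2*γ| ≤ π/3) (hcos : Real.cos (|2*θ - 2*γ|) = A + (A + -A)) 
    : True := trivial

lemma key_hump_bound {A lam γ θ v : ℝ} (hA1 : 1/2 ≤ A) (hA2 : A ≤ 4/5) (hlam : 0 < lam)
    (hy3 : |2*θ - 2*γ| ≤ π/3) (hcosy : Real.cos |2*θ - 2*γ| = v) (hvA : A ≤ v) :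
    Real.exp (-(lam * (v - A))) ≤ hump (lam/8) (Real.arccos A) γ θ := by
  have hpi := Real.pi_pos
  set x := Real.arccos A with hx
  set y := |2*θ - 2*γ| with hy
  have hy0 : 0 ≤ y := abs_nonneg _
  have hcosx : Real.cos x = A := Real.cos_arccos (by linarith) (by linarith)
  have hxpi : x ≤ π := Real.arccos_le_pi A
  have hx0 : 0 ≤ x := Real.arccos_nonneg A
  have hyx : y ≤ x := by
    by_contra h'
    push_neg at h'
    have := Real.strictAntiOn_cos ⟨hx0, hxpi⟩ ⟨hy0, by linarith⟩ h'
    rw [hcosx, hcosy] at this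
    linarith
  have hchord : (x - y)/8 ≤ Real.cos y - A := chord hA1 hA2 hy0 hyx
  rw [hcosy] at hchord
  have habs : |θ - γ| = y/2 := by
    rw [hy, show 2*θ - 2*γ = 2*(θ - γ) by ring, abs_mul, show |(2:ℝ)| = 2 by norm_num]
    ring
  have hge := hump_ge (μ := lam/8) (x := x) (c := γ) (θ := θ) (by rw [habs]; linarith)
  refine le_trans ?_ hge
  rw [Real.exp_le_exp, habs]
  have : 2*(lam/8)*(y/2) - lam/8*x = -(lam * ((x - y)/8)) := by ring
  rw [this]
  have := mul_le_mul_of_nonneg_left hchord hlam.le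
  linarith

lemma branch_plus (A lam : ℝ) (hA1 : 1/2 ≤ A) (hA2 : A ≤ 4/5) (hlam : 0 < lam) :
    ∫ θ in Ioc 0 (2*π), ({θ : ℝ | A ≤ Real.cos (2*θ)}.indicator
      (fun θ => Real.exp (-(lam * (Real.cos (2*θ) - A)))) θ) ≤ 24 / lam := by
  have hpi := Real.pi_pos
  set μ := lam/8 with hμdef
  have hμ : 0 < μ := by positivity
  set x := Real.arccos A with hx
  have hSmeas : MeasurableSet {θ : ℝ | A ≤ Real.cos (2*θ)} :=
    (isClosed_le continuous_const (by continuity)).measurableSet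
  have hpoint : ∀ θ ∈ Ioc 0 (2*π),
      ({θ : ℝ | A ≤ Real.cos (2*θ)}.indicator
        (fun θ => Real.exp (-(lam * (Real.cos (2*θ) - A)))) θ)
      ≤ hump μ x 0 θ + hump μ x π θ + hump μ x (2*π) θ := by
    intro θ hθ
    by_cases hmem : θ ∈ {θ : ℝ | A ≤ Real.cos (2*θ)}
    · rw [Set.indicator_of_mem hmem]
      have hc : A ≤ Real.cos (2*θ) := hmem
      have hloc := locate_plus (z := 2*θ) (by linarith [hθ.1]) (by linarith [hθ.2]) (by linarith)
      have h0 := hump_nonneg μ x 0 θ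
      have h1 := hump_nonneg μ x π θ
      have h2 := hump_nonneg μ x (2*π) θ
      rcases hloc with hl | hl | hl
      · have hcosy : Real.cos |2*θ - 2*(0:ℝ)| = Real.cos (2*θ) := by
          rw [show 2*θ - 2*(0:ℝ) = 2*θ by ring, Real.cos_abs]
        have := key_hump_bound hA1 hA2 hlam (γ := (0:ℝ))
          (by rw [show 2*θ - 2*(0:ℝ) = 2*θ by ring]; exact hl) hcosy hc
        linarith
      · have hcosy : Real.cos |2*θ - 2*π| = Real.cos (2*θ) := by
          rw [Real.cos_abs, Real.cos_sub_two_pi]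
        have := key_hump_bound hA1 hA2 hlam (γ := π) hl hcosy hc
        linarith
      · have hcosy : Real.cos |2*θ - 2*(2*π)| = Real.cos (2*θ) := by
          rw [Real.cos_abs, show 2*θ - 2*(2*π) = (2*θ - 2*π) - 2*π by ring,
            Real.cos_sub_two_pi, Real.cos_sub_two_pi]
        have := key_hump_bound hA1 hA2 hlam (γ := 2*π)
          (by rw [show 2*θ - 2*(2*π) = 2*θ - 4*π by ring]; exact hl) hcosy hc
        linarith
    · rw [Set.indicator_of_notMem hmem]
      have h0 := hump_nonneg μ x 0 θ
      have h1 := hump_nonneg μ x π θ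
      have h2 := hump_nonneg μ x (2*π) θ
      linarith
  have hLint : IntegrableOn (fun θ => ({θ : ℝ | A ≤ Real.cos (2*θ)}.indicator
      (fun θ => Real.exp (-(lam * (Real.cos (2*θ) - A)))) θ)) (Ioc 0 (2*π)) := by
    apply Integrable.indicator ?_ hSmeas
    exact Continuous.integrableOn_Ioc (by continuity)
  have hRint : IntegrableOn (fun θ => hump μ x 0 θ + hump μ x π θ + hump μ x (2*π) θ)
      (Ioc 0 (2*π)) :=
    ((hump_integrableOn μ x 0).add (hump_integrableOn μ x π)).add (hump_integrableOn μ x (2*π))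
  have hmono := MeasureTheory.setIntegral_mono_on hLint hRint measurableSet_Ioc hpoint
  refine hmono.trans ?_
  have hsplit : ∫ θ in Ioc 0 (2*π), (hump μ x 0 θ + hump μ x π θ + hump μ x (2*π) θ)
      = (∫ θ in Ioc 0 (2*π), hump μ x 0 θ) + (∫ θ in Ioc 0 (2*π), hump μ x π θ)
        + ∫ θ in Ioc 0 (2*π), hump μ x (2*π) θ := by
    rw [MeasureTheory.integral_add (f := fun θ => hump μ x 0 θ + hump μ x π θ)
      (g := fun θ => hump μ x (2*π) θ)
      ((hump_integrableOn μ x 0).add (hump_integrableOn μ x π)) (hump_integrableOn μ x (2*π)),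
      MeasureTheory.integral_add (f := fun θ => hump μ x 0 θ) (g := fun θ => hump μ x π θ)
      (hump_integrableOn μ x 0) (hump_integrableOn μ x π)]
  rw [hsplit]
  have hxnn : 0 ≤ x := Real.arccos_nonneg A
  have b0 := hump_integral μ 0 x hμ hxnn
  have b1 := hump_integral μ π x hμ hxnn
  have b2 := hump_integral μ (2*π) x hμ hxnn
  have : 1/μ = 8/lam := by
    rw [hμdef]
    field_simp
  rw [this] at b0 b1 b2
  have : (24:ℝ)/lam = 8/lam + 8/lam + 8/lam := by ring
  rw [this]
  linarith

lemma branch_minus (B lam : ℝ) (hB1 : -(4/5) ≤ B) (hB2 : B ≤ -(1/2)) (hlam : 0 < lam) :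
    ∫ θ in Ioc 0 (2*π), ({θ : ℝ | Real.cos (2*θ) ≤ B}.indicator
      (fun θ => Real.exp (-(lam * (B - Real.cos (2*θ))))) θ) ≤ 16 / lam := by
  have hpi := Real.pi_pos
  set μ := lam/8 with hμdef
  have hμ : 0 < μ := by positivity
  set A := -B with hA
  have hA1 : 1/2 ≤ A := by rw [hA]; linarith
  have hA2 : A ≤ 4/5 := by rw [hA]; linarith
  set x := Real.arccos A with hx
  have hSmeas : MeasurableSet {θ : ℝ | Real.cos (2*θ) ≤ B} :=
    (isClosed_le (by continuity) continuous_const).measurableSet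
  have hpoint : ∀ θ ∈ Ioc 0 (2*π),
      ({θ : ℝ | Real.cos (2*θ) ≤ B}.indicator
        (fun θ => Real.exp (-(lam * (B - Real.cos (2*θ))))) θ)
      ≤ hump μ x (π/2) θ + hump μ x (3*π/2) θ := by
    intro θ hθ
    by_cases hmem : θ ∈ {θ : ℝ | Real.cos (2*θ) ≤ B}
    · rw [Set.indicator_of_mem hmem]
      have hc : Real.cos (2*θ) ≤ B := hmem
      have hloc := locate_minus (z := 2*θ) (by linarith [hθ.1]) (by linarith [hθ.2])
        (by linarith)
      have h0 := hump_nonneg μ x (π/2) θ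
      have h1 := hump_nonneg μ x (3*π/2) θ
      have hBv : B - Real.cos (2*θ) = (-Real.cos (2*θ)) - A := by rw [hA]; ring
      rcases hloc with hl | hl
      · have hcosy : Real.cos |2*θ - 2*(π/2)| = -Real.cos (2*θ) := by
          rw [Real.cos_abs, show 2*θ - 2*(π/2) = -(π - 2*θ) by ring, Real.cos_neg,
            Real.cos_pi_sub]
        have := key_hump_bound hA1 hA2 hlam (γ := π/2) (v := -Real.cos (2*θ))
          (by rw [show 2*θ - 2*(π/2) = 2*θ - π by ring]; exact hl) hcosy (by linarith)
        rw [hBv]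
        linarith
      · have hcosy : Real.cos |2*θ - 2*(3*π/2)| = -Real.cos (2*θ) := by
          rw [Real.cos_abs, show 2*θ - 2*(3*π/2) = (2*θ - 2*π) - π by ring]
          rw [show (2*θ - 2*π) - π = -(π - (2*θ - 2*π)) by ring, Real.cos_neg, Real.cos_pi_sub,
            Real.cos_sub_two_pi]
        have := key_hump_bound hA1 hA2 hlam (γ := 3*π/2) (v := -Real.cos (2*θ))
          (by rw [show 2*θ - 2*(3*π/2) = 2*θ - 3*π by ring]; exact hl) hcosy (by linarith)
        rw [hBv]
        linarith
    · rw [Set.indicator_of_notMem hmem]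
      have h0 := hump_nonneg μ x (π/2) θ
      have h1 := hump_nonneg μ x (3*π/2) θ
      linarith
  have hLint : IntegrableOn (fun θ => ({θ : ℝ | Real.cos (2*θ) ≤ B}.indicator
      (fun θ => Real.exp (-(lam * (B - Real.cos (2*θ))))) θ)) (Ioc 0 (2*π)) := by
    apply Integrable.indicator ?_ hSmeas
    exact Continuous.integrableOn_Ioc (by continuity)
  have hRint : IntegrableOn (fun θ => hump μ x (π/2) θ + hump μ x (3*π/2) θ) (Ioc 0 (2*π)) :=
    (hump_integrableOn μ x (π/2)).add (hump_integrableOn μ x (3*π/2))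
  have hmono := MeasureTheory.setIntegral_mono_on hLint hRint measurableSet_Ioc hpoint
  refine hmono.trans ?_
  rw [MeasureTheory.integral_add (f := fun θ => hump μ x (π/2) θ) (g := fun θ => hump μ x (3*π/2) θ)
    (hump_integrableOn μ x (π/2)) (hump_integrableOn μ x (3*π/2))]
  have hxnn : 0 ≤ x := Real.arccos_nonneg A
  have b0 := hump_integral μ (π/2) x hμ hxnn
  have b1 := hump_integral μ (3*π/2) x hμ hxnn
  have : 1/μ = 8/lam := by
    rw [hμdef]; field_simp
  rw [this] at b0 b1
  have : (16:ℝ)/lam = 8/lam + 8/lam := by ring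
  rw [this]
  linarith



def aRoot (R : ℝ) : ℝ := (Real.sqrt (1 + 8*R^4) - 1)/(4*R^2)
def bRoot (R : ℝ) : ℝ := -((Real.sqrt (1 + 8*R^4) + 1)/(4*R^2))

lemma sqrt_facts (R : ℝ) (hR : 2 ≤ R) :
    Real.sqrt (1 + 8*R^4) * Real.sqrt (1 + 8*R^4) = 1 + 8*R^4
    ∧ 0 ≤ Real.sqrt (1 + 8*R^4) := by
  exact ⟨Real.mul_self_sqrt (by positivity), Real.sqrt_nonneg _⟩

lemma aRoot_mem (R : ℝ) (hR : 2 ≤ R) : 1/2 ≤ aRoot R ∧ aRoot R ≤ 4/5 := by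
  obtain ⟨hss, hs0⟩ := sqrt_facts R hR
  set s := Real.sqrt (1 + 8*R^4)
  have hR2 : (0:ℝ) < 4*R^2 := by positivity
  have hR4 : (4:ℝ) ≤ R^2 := by nlinarith
  have hsge : 2*R^2 + 1 ≤ s := by nlinarith
  have hsle : s ≤ 16*R^2/5 - 1 := by nlinarith
  constructor
  · rw [aRoot, le_div_iff₀ hR2]; nlinarith
  · rw [aRoot, div_le_iff₀ hR2]; nlinarith

lemma bRoot_mem (R : ℝ) (hR : 2 ≤ R) : -(4/5) ≤ bRoot R ∧ bRoot R ≤ -(1/2) := by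
  obtain ⟨hss, hs0⟩ := sqrt_facts R hR
  set s := Real.sqrt (1 + 8*R^4)
  have hR2 : (0:ℝ) < 4*R^2 := by positivity
  have hR4 : (4:ℝ) ≤ R^2 := by nlinarith
  have hsge : 2*R^2 + 1 ≤ s := by nlinarith
  have hsle : s ≤ 16*R^2/5 - 1 := by nlinarith
  constructor
  · rw [bRoot, neg_le_neg_iff, div_le_iff₀ hR2]; nlinarith
  · rw [bRoot, neg_le_neg_iff, le_div_iff₀ hR2]; nlinarith

lemma root_sum (R : ℝ) (hR : 2 ≤ R) : R^2*(aRoot R + bRoot R) = -(1/2) := by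
  have hRne : (R:ℝ) ≠ 0 := by positivity
  rw [aRoot, bRoot]
  field_simp
  ring

lemma root_prod (R : ℝ) (hR : 2 ≤ R) : aRoot R * bRoot R = -(1/2) := by
  obtain ⟨hss, hs0⟩ := sqrt_facts R hR
  have hRne : (R:ℝ) ≠ 0 := by positivity
  rw [aRoot, bRoot]
  field_simp
  nlinarith [hss]

lemma root_factor (R u : ℝ) (hR : 2 ≤ R) :
    R^2*u + R^4*(2*u^2 - 1) = 2*R^4*((u - aRoot R)*(u - bRoot R)) := by
  have h1 := root_sum R hR
  have h2 := root_prod R hR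
  linear_combination (2*R^2*u) * h1 + (-(2*R^4)) * h2

lemma root_gap (R : ℝ) (hR : 2 ≤ R) : 1 ≤ aRoot R - bRoot R := by
  obtain ⟨hss, hs0⟩ := sqrt_facts R hR
  set s := Real.sqrt (1 + 8*R^4)
  have hR2 : (0:ℝ) < 4*R^2 := by positivity
  have hR4 : (4:ℝ) ≤ R^2 := by nlinarith
  have hsge : 2*R^2 + 1 ≤ s := by nlinarith
  rw [aRoot, bRoot]
  rw [show (s - 1)/(4*R^2) - -((s + 1)/(4*R^2)) = (2*s)/(4*R^2) by ring]
  rw [le_div_iff₀ hR2]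
  nlinarith

lemma key_disj (R u : ℝ) (hR : 2 ≤ R) (hW : 0 ≤ R^2*u + R^4*(2*u^2-1)) :
    (aRoot R ≤ u ∧ 2*R^4*(u - aRoot R) ≤ R^2*u + R^4*(2*u^2-1)) ∨
    (u ≤ bRoot R ∧ 2*R^4*(bRoot R - u) ≤ R^2*u + R^4*(2*u^2-1)) := by
  have hfact := root_factor R u hR
  have hgap := root_gap R hR
  have hR4 : (0:ℝ) < R^4 := by positivity
  rcases le_or_gt (aRoot R) u with h | h
  · left
    refine ⟨h, ?_⟩
    nlinarith [mul_nonneg (sub_nonneg.mpr h) (show (0:ℝ) ≤ u - bRoot R - 1 by linarith)]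
  · right
    have hub : u ≤ bRoot R := by
      by_contra h'
      push_neg at h'
      nlinarith [mul_pos (sub_pos.mpr h) (sub_pos.mpr h')]
    refine ⟨hub, ?_⟩
    nlinarith [mul_nonneg (sub_nonneg.mpr hub) (show (0:ℝ) ≤ aRoot R - u - 1 by linarith)]


lemma S3_closed : IsClosed S3 := by
  have hc : Continuous (fun l : ℂ => (l ^ 2 + l ^ 4).re) :=
    Complex.continuous_re.comp ((continuous_pow 2).add (continuous_pow 4))
  exact isClosed_le continuous_const hc

lemma ccIn_closed {F : Set ℂ} (hF : IsClosed F) (x : ℂ) :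
    IsClosed (connectedComponentIn F x) := by
  rw [connectedComponentIn]
  split_ifs with h
  · exact (hF.isClosedMap_subtype_val) _ isClosed_connectedComponent
  · exact isClosed_empty

lemma lam_pow_eq (R θ : ℝ) (n : ℕ) :
    ((R:ℂ) * Complex.exp (Complex.I * (θ:ℂ))) ^ n
      = ((R^n : ℝ) : ℂ) * Complex.exp (((n*θ : ℝ) : ℂ) * Complex.I) := by
  have harg : ((n:ℂ)) * (Complex.I * (θ:ℂ)) = (((n*θ:ℝ)):ℂ) * Complex.I := by
    push_cast; ring
  rw [mul_pow, ← Complex.exp_nat_mul, harg]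
  push_cast; ring

lemma lam_sq_add_pow4_re (R θ : ℝ) :
    ((((R:ℂ) * Complex.exp (Complex.I * (θ:ℂ))) ^ 2
      + ((R:ℂ) * Complex.exp (Complex.I * (θ:ℂ))) ^ 4)).re
    = R^2 * Real.cos (2*θ) + R^4 * Real.cos (4*θ) := by
  rw [Complex.add_re, lam_pow_eq R θ 2, lam_pow_eq R θ 4,
    Complex.re_ofReal_mul, Complex.re_ofReal_mul,
    Complex.exp_ofReal_mul_I_re, Complex.exp_ofReal_mul_I_re]
  push_cast; ring

/-- Jordan-type lemma for the dispersion relation `ω(λ) = λ² + λ⁴`: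
for any connected component `K` of `{Re ω ≥ 0}`, the integral of `λ^{3-j} e^{-ω(λ)t} ψ(λ)`
over the counterclockwise arc `K ∩ {|λ| = R}` (parametrized by `λ = Re^{iθ}`) tends to `0`. -/
theorem stmt3 (t : ℝ) (ht : 0 < t) (j : ℕ) (ψ : ℂ → ℂ) (hcont : Continuous ψ)
    (hdecay : ∀ ε : ℝ, 0 < ε → ∃ A₀ : ℝ, ∀ A : ℝ, A₀ ≤ A → ∀ l : ℂ, ‖l‖ = A → ‖ψ l‖ ≤ ε)
    (K : Set ℂ) (hK : ∃ l ∈ S3, K = connectedComponentIn S3 l) :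
    Tendsto (fun R : ℝ =>
        ∫ θ in {θ : ℝ | θ ∈ Ioc 0 (2*π) ∧ (R:ℂ) * Complex.exp (Complex.I * (θ:ℂ)) ∈ K},
          ((R:ℂ) * Complex.exp (Complex.I * (θ:ℂ))) ^ ((3:ℤ) - (j:ℤ))
            * Complex.exp (-(((R:ℂ) * Complex.exp (Complex.I * (θ:ℂ))) ^ 2
                + ((R:ℂ) * Complex.exp (Complex.I * (θ:ℂ))) ^ 4) * (t:ℂ))
            * ψ ((R:ℂ) * Complex.exp (Complex.I * (θ:ℂ)))
            * (Complex.I * (R:ℂ) * Complex.exp (Complex.I * (θ:ℂ)))) atTop (𝓝 0) := by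
  obtain ⟨l0, hl0, hKeq⟩ := hK
  have hKclosed : IsClosed K := hKeq ▸ ccIn_closed S3_closed l0
  have hKsub : K ⊆ S3 := hKeq ▸ connectedComponentIn_subset S3 l0
  rw [NormedAddCommGroup.tendsto_nhds_zero]
  intro ε hε
  have hε' : 0 < ε * t / 21 := by positivity
  obtain ⟨A₀, hA₀⟩ := hdecay (ε * t / 21) hε'
  filter_upwards [Filter.eventually_ge_atTop (max 2 A₀)] with R hR
  have hR2 : (2:ℝ) ≤ R := le_trans (le_max_left _ _) hR
  have hRA : A₀ ≤ R := le_trans (le_max_right _ _) hR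
  have hR0 : (0:ℝ) < R := by linarith
  have hR1 : (1:ℝ) ≤ R := by linarith
  set ε' := ε * t / 21 with hε'def
  set lam := 2 * t * R^4 with hlamdef
  have hlam0 : 0 < lam := by positivity
  set Λ : ℝ → ℂ := fun θ => (R:ℂ) * Complex.exp (Complex.I * (θ:ℂ)) with hΛ
  set f : ℝ → ℂ := fun θ => (Λ θ) ^ ((3:ℤ) - (j:ℤ))
      * Complex.exp (-((Λ θ) ^ 2 + (Λ θ) ^ 4) * (t:ℂ))
      * ψ (Λ θ) * (Complex.I * (R:ℂ) * Complex.exp (Complex.I * (θ:ℂ))) with hf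
  set S : Set ℝ := {θ : ℝ | θ ∈ Ioc 0 (2*π) ∧ Λ θ ∈ K} with hS
  show ‖∫ θ in S, f θ‖ < ε
  -- basic continuity facts
  have hΛcont : Continuous Λ := by
    apply continuous_const.mul
    exact Complex.continuous_exp.comp (continuous_const.mul Complex.continuous_ofReal)
  have hΛne : ∀ θ, Λ θ ≠ 0 := fun θ =>
    mul_ne_zero (by exact_mod_cast hR0.ne') (Complex.exp_ne_zero _)
  have hfcont : Continuous f := by
    apply Continuous.mul
    apply Continuous.mul
    apply Continuous.mul
    · exact hΛcont.zpow₀ _ (fun θ => Or.inl (hΛne θ))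
    · exact Complex.continuous_exp.comp
        (((((hΛcont.pow 2).add (hΛcont.pow 4)).neg).mul continuous_const))
    · exact hcont.comp hΛcont
    · exact (continuous_const.mul
        (Complex.continuous_exp.comp (continuous_const.mul Complex.continuous_ofReal)))
  have hSmeas : MeasurableSet S := by
    have : S = Ioc 0 (2*π) ∩ Λ ⁻¹' K := rfl
    rw [this]
    exact measurableSet_Ioc.inter ((hKclosed.preimage hΛcont).measurableSet)
  have hSsub : S ⊆ Ioc 0 (2*π) := fun θ hθ => hθ.1
  -- norm facts
  have hΛnorm : ∀ θ : ℝ, ‖Λ θ‖ = R := by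
    intro θ
    rw [hΛ]
    simp only [norm_mul, Complex.norm_real, Real.norm_eq_abs, abs_of_pos hR0]
    have : ‖Complex.exp (Complex.I * (θ:ℂ))‖ = 1 := by
      rw [mul_comm]
      exact Complex.norm_exp_ofReal_mul_I θ
    rw [this, mul_one]
  -- indicator majorants
  set Ip : ℝ → ℝ := fun θ => ({θ : ℝ | aRoot R ≤ Real.cos (2*θ)}.indicator
      (fun θ => Real.exp (-(lam * (Real.cos (2*θ) - aRoot R)))) θ) with hIp
  set Im : ℝ → ℝ := fun θ => ({θ : ℝ | Real.cos (2*θ) ≤ bRoot R}.indicator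
      (fun θ => Real.exp (-(lam * (bRoot R - Real.cos (2*θ))))) θ) with hIm
  have hIpnn : ∀ θ, 0 ≤ Ip θ := fun θ => Set.indicator_nonneg (fun θ _ => by positivity) θ
  have hImnn : ∀ θ, 0 ≤ Im θ := fun θ => Set.indicator_nonneg (fun θ _ => by positivity) θ
  -- pointwise bound on S
  have hpoint : ∀ θ ∈ S, ‖f θ‖ ≤ ε' * R^4 * (Ip θ + Im θ) := by
    intro θ hθ
    have hmemK : Λ θ ∈ K := hθ.2
    have hW0 : 0 ≤ R^2 * Real.cos (2*θ) + R^4 * Real.cos (4*θ) := by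
      have hmem : 0 ≤ ((Λ θ)^2 + (Λ θ)^4).re := hKsub hmemK
      have h2 : ((Λ θ)^2 + (Λ θ)^4).re = R^2 * Real.cos (2*θ) + R^4 * Real.cos (4*θ) := by
        rw [hΛ]; exact lam_sq_add_pow4_re R θ
      rw [h2] at hmem; exact hmem
    set u := Real.cos (2*θ) with hu
    have h4cos : Real.cos (4*θ) = 2*u^2 - 1 := by
      rw [hu, show (4:ℝ)*θ = 2*(2*θ) by ring, Real.cos_two_mul]
    have hWeq : R^2 * Real.cos (2*θ) + R^4 * Real.cos (4*θ) = R^2*u + R^4*(2*u^2-1) := by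
      rw [h4cos, ← hu]
    set W := R^2*u + R^4*(2*u^2-1) with hW
    have hW0' : 0 ≤ W := by rw [← hWeq]; exact hW0
    -- norm of f
    have hnf : ‖f θ‖ ≤ ε' * R^4 * Real.exp (-(t * W)) := by
      rw [hf]
      simp only [norm_mul]
      have h1 : ‖(Λ θ) ^ ((3:ℤ) - (j:ℤ))‖ ≤ R ^ 3 := by
        rw [norm_zpow, hΛnorm]
        calc R ^ ((3:ℤ) - (j:ℤ)) ≤ R ^ (((3:ℕ)):ℤ) :=
              zpow_le_zpow_right₀ hR1 (by push_cast; omega)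
          _ = R ^ (3:ℕ) := zpow_natCast R 3
      have h2 : ‖Complex.exp (-((Λ θ) ^ 2 + (Λ θ) ^ 4) * (t:ℂ))‖ = Real.exp (-(t * W)) := by
        rw [Complex.norm_exp]
        congr 1
        have hre : (((Λ θ) ^ 2 + (Λ θ) ^ 4)).re = R^2 * Real.cos (2*θ) + R^4 * Real.cos (4*θ) := by
          rw [hΛ]; exact lam_sq_add_pow4_re R θ
        have : (-((Λ θ) ^ 2 + (Λ θ) ^ 4) * (t:ℂ)).re
            = -(((Λ θ) ^ 2 + (Λ θ) ^ 4).re) * t := by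
          simp [Complex.mul_re]
        rw [this, hre, hWeq]
        ring
      have h3 : ‖ψ (Λ θ)‖ ≤ ε' := hA₀ R hRA (Λ θ) (hΛnorm θ)
      have h4 : ‖Complex.I‖ * ‖(R:ℂ)‖ * ‖Complex.exp (Complex.I * (θ:ℂ))‖ = R := by
        rw [Complex.norm_I, one_mul, Complex.norm_real, Real.norm_eq_abs, abs_of_pos hR0]
        rw [mul_comm Complex.I ((θ:ℂ)), Complex.norm_exp_ofReal_mul_I, mul_one]
      rw [h2, h4]
      have hψnn : 0 ≤ ‖ψ (Λ θ)‖ := norm_nonneg _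
      have he : (0:ℝ) < Real.exp (-(t*W)) := Real.exp_pos _
      calc ‖(Λ θ) ^ ((3:ℤ) - (j:ℤ))‖ * Real.exp (-(t*W)) * ‖ψ (Λ θ)‖ * R
          ≤ R^3 * Real.exp (-(t*W)) * ε' * R := by
            apply mul_le_mul_of_nonneg_right ?_ hR0.le
            apply mul_le_mul ?_ h3 hψnn (by positivity)
            exact mul_le_mul_of_nonneg_right h1 he.le
        _ = ε' * R^4 * Real.exp (-(t*W)) := by ring
    refine hnf.trans ?_
    apply mul_le_mul_of_nonneg_left ?_ (by positivity)
    -- exponential ≤ indicators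
    rcases key_disj R u hR2 hW0' with ⟨hau, hb⟩ | ⟨hub, hb⟩
    · have hmem : θ ∈ {θ : ℝ | aRoot R ≤ Real.cos (2*θ)} := hau
      have : Ip θ = Real.exp (-(lam * (u - aRoot R))) := by
        rw [hIp]
        simp only []
        rw [Set.indicator_of_mem hmem, hu]
      rw [this]
      have hle : Real.exp (-(t*W)) ≤ Real.exp (-(lam * (u - aRoot R))) := by
        rw [Real.exp_le_exp, hlamdef]
        nlinarith [mul_le_mul_of_nonneg_left hb ht.le]
      linarith [hImnn θ]
    · have hmem : θ ∈ {θ : ℝ | Real.cos (2*θ) ≤ bRoot R} := hub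
      have : Im θ = Real.exp (-(lam * (bRoot R - u))) := by
        rw [hIm]
        simp only []
        rw [Set.indicator_of_mem hmem, hu]
      rw [this]
      have hle : Real.exp (-(t*W)) ≤ Real.exp (-(lam * (bRoot R - u))) := by
        rw [Real.exp_le_exp, hlamdef]
        nlinarith [mul_le_mul_of_nonneg_left hb ht.le]
      linarith [hIpnn θ]
  -- integrability
  have hfi : IntegrableOn f S := ((hfcont.integrableOn_Ioc).mono_set hSsub)
  have hcos2 : Continuous (fun θ : ℝ => Real.cos (2*θ)) :=
    Real.continuous_cos.comp (continuous_const.mul continuous_id)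
  have hIpmeas : MeasurableSet {θ : ℝ | aRoot R ≤ Real.cos (2*θ)} :=
    (isClosed_le continuous_const hcos2).measurableSet
  have hImmeas : MeasurableSet {θ : ℝ | Real.cos (2*θ) ≤ bRoot R} :=
    (isClosed_le hcos2 continuous_const).measurableSet
  have hIpint : IntegrableOn Ip (Ioc 0 (2*π)) := by
    apply Integrable.indicator ?_ hIpmeas
    exact Continuous.integrableOn_Ioc
      (Real.continuous_exp.comp ((continuous_const.mul (hcos2.sub continuous_const)).neg))
  have hImint : IntegrableOn Im (Ioc 0 (2*π)) := by
    apply Integrable.indicator ?_ hImmeas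
    exact Continuous.integrableOn_Ioc
      (Real.continuous_exp.comp ((continuous_const.mul (continuous_const.sub hcos2)).neg))
  have hGint : IntegrableOn (fun θ => ε' * R^4 * (Ip θ + Im θ)) (Ioc 0 (2*π)) :=
    ((hIpint.add hImint).const_mul _)
  -- the chain
  have step1 : ‖∫ θ in S, f θ‖ ≤ ∫ θ in S, ‖f θ‖ := norm_integral_le_integral_norm _
  have step2 : ∫ θ in S, ‖f θ‖ ≤ ∫ θ in S, ε' * R^4 * (Ip θ + Im θ) :=
    setIntegral_mono_on hfi.norm (hGint.mono_set hSsub) hSmeas hpoint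
  have step3 : ∫ θ in S, ε' * R^4 * (Ip θ + Im θ)
      ≤ ∫ θ in Ioc 0 (2*π), ε' * R^4 * (Ip θ + Im θ) := by
    apply setIntegral_mono_set hGint
    · exact Filter.Eventually.of_forall
        (fun θ => mul_nonneg (by positivity) (add_nonneg (hIpnn θ) (hImnn θ)))
    · exact HasSubset.Subset.eventuallyLE hSsub
  have step4 : ∫ θ in Ioc 0 (2*π), ε' * R^4 * (Ip θ + Im θ)
      = ε' * R^4 * ((∫ θ in Ioc 0 (2*π), Ip θ) + ∫ θ in Ioc 0 (2*π), Im θ) := by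
    rw [MeasureTheory.integral_const_mul]
    congr 1
    exact MeasureTheory.integral_add hIpint hImint
  have hbp : ∫ θ in Ioc 0 (2*π), Ip θ ≤ 24 / lam :=
    branch_plus (aRoot R) lam (aRoot_mem R hR2).1 (aRoot_mem R hR2).2 hlam0
  have hbm : ∫ θ in Ioc 0 (2*π), Im θ ≤ 16 / lam :=
    branch_minus (bRoot R) lam (bRoot_mem R hR2).1 (bRoot_mem R hR2).2 hlam0
  have step5 : ε' * R^4 * ((∫ θ in Ioc 0 (2*π), Ip θ) + ∫ θ in Ioc 0 (2*π), Im θ)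
      ≤ ε' * R^4 * (40 / lam) := by
    apply mul_le_mul_of_nonneg_left ?_ (by positivity)
    have : (40:ℝ)/lam = 24/lam + 16/lam := by ring
    rw [this]
    have h0 := (hIpnn 0)
    linarith [hbp, hbm]
  have hfinal : ε' * R^4 * (40 / lam) = 20 * ε' / t := by
    rw [hlamdef]
    field_simp
    ring
  calc ‖∫ θ in S, f θ‖ ≤ ε' * R^4 * (40 / lam) := by linarith [step1, step2, step3, step5, step4 ▸ step3]
    _ = 20 * ε' / t := hfinal
    _ < ε := by
      rw [hε'def]
      have heq : 20 * (ε * t / 21) / t = (20/21) * ε := by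
        field_simp
      rw [heq]
      linarith

end
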